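/- arXiv:2605.08573 — 2 statements merged into one kernel-verified Lean document; each statement's English description precedes it below -/
import Mathlib

section
/- Let φ : [0,2] → ℝ be C¹ with φ(0) = φ'(0) = 0, φ increasing on (0,1) and decreasing on (1,2). Set a₀ = sup_{0<t<1} φ'(t). Suppose there exist r₀ ∈ (1,2) and δ > 0 with r₀ + δ < 2 such that for all t ∈ (r₀, r₀+δ): -(1/2) δ^{-1} φ(r₀) < φ'(t) < -(3/2)√2 a₀ δ^{-1/2}. Then M(r₀+δ) := 2 ∫_0^{r₀+δ} φ'(s)(r₀+δ-s)^{-1/2} ds ≤ -2√2 a₀ < 0, and moreover φ(r₀+δ) ≥ (1/2) φ(r₀). -/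
open Real MeasureTheory Set

/-- `M(r₀+δ) ≤ -2√2·a₀ < 0` and `φ(r₀+δ) ≥ φ(r₀)/2`. -/
theorem stmt4 (φ : ℝ → ℝ)
    (hC1 : ContDiffOn ℝ 1 φ (Icc (0:ℝ) 2))
    (hφ0 : φ 0 = 0) (hφ'0 : deriv φ 0 = 0)
    (hmono : MonotoneOn φ (Ioo (0:ℝ) 1))
    (hanti : AntitoneOn φ (Ioo (1:ℝ) 2))
    (a₀ : ℝ) (ha₀ : a₀ = sSup (deriv φ '' Ioo (0:ℝ) 1)) (ha₀pos : 0 < a₀)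
    (r₀ δ : ℝ) (hr₀ : r₀ ∈ Ioo (1:ℝ) 2) (hδ : 0 < δ) (hrδ : r₀ + δ < 2)
    (hband : ∀ t ∈ Ioo r₀ (r₀ + δ),
      -(1/2) * δ⁻¹ * φ r₀ < deriv φ t ∧
      deriv φ t < -(3/2) * Real.sqrt 2 * a₀ * δ ^ (-(1:ℝ)/2)) :
    2 * (∫ s in (0:ℝ)..(r₀ + δ), deriv φ s * (r₀ + δ - s) ^ (-(1:ℝ)/2))
        ≤ -2 * Real.sqrt 2 * a₀ ∧
    -2 * Real.sqrt 2 * a₀ < 0 ∧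
    φ (r₀ + δ) ≥ (1/2) * φ r₀ := by
  obtain ⟨hr1, hr2⟩ := hr₀
  set T := r₀ + δ with hTdef
  have hT1 : 1 < T := by simp only [hTdef]; linarith
  have hT2 : T < 2 := hrδ
  have hT0 : 0 < T := by linarith
  have hrT : r₀ < T := by simp only [hTdef]; linarith
  have hsqrt2pos : 0 < Real.sqrt 2 := Real.sqrt_pos.mpr (by norm_num)
  -- basic facts about derivatives
  have hUD : UniqueDiffOn ℝ (Icc (0:ℝ) 2) := uniqueDiffOn_Icc (by norm_num)
  set g := derivWithin φ (Icc (0:ℝ) 2) with hgdef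
  have hgc : ContinuousOn g (Icc (0:ℝ) 2) := hC1.continuousOn_derivWithin hUD le_rfl
  have hdiff : ∀ x ∈ Ioo (0:ℝ) 2, DifferentiableAt ℝ φ x := fun x hx =>
    ((hC1.differentiableOn one_ne_zero) x (Ioo_subset_Icc_self hx)).differentiableAt
      (Icc_mem_nhds hx.1 hx.2)
  have hgd : ∀ x ∈ Ioo (0:ℝ) 2, g x = deriv φ x := fun x hx =>
    derivWithin_of_mem_nhds (Icc_mem_nhds hx.1 hx.2)
  -- deriv φ ≤ a₀ on (0,1)
  have hbdd : BddAbove (deriv φ '' Ioo (0:ℝ) 1) := by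
    have h1 : BddAbove (g '' Icc (0:ℝ) 2) :=
      (isCompact_Icc.image_of_continuousOn hgc).bddAbove
    refine h1.mono ?_
    rintro _ ⟨x, hx, rfl⟩
    exact ⟨x, ⟨hx.1.le, by linarith [hx.2]⟩, hgd x ⟨hx.1, by linarith [hx.2]⟩⟩
  have ha : ∀ s ∈ Ioo (0:ℝ) 1, deriv φ s ≤ a₀ := fun s hs =>
    ha₀ ▸ le_csSup hbdd ⟨s, hs, rfl⟩
  -- deriv φ ≤ 0 on (1,2)
  have hneg : ∀ s ∈ Ioo (1:ℝ) 2, deriv φ s ≤ 0 := by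
    intro s hs
    have hs02 : s ∈ Ioo (0:ℝ) 2 := ⟨by linarith [hs.1], hs.2⟩
    have hd := (hdiff s hs02).hasDerivAt
    have htends : Filter.Tendsto (slope φ s) (nhdsWithin s (Ioi s)) (nhds (deriv φ s)) :=
      (hasDerivAt_iff_tendsto_slope.mp hd).mono_left
        (nhdsWithin_mono s (fun x hx => ne_of_gt hx))
    refine le_of_tendsto htends ?_
    filter_upwards [Ioo_mem_nhdsGT_of_mem ⟨le_refl s, hs.2⟩] with t ht
    have hle : φ t ≤ φ s := hanti hs ⟨hs.1.trans ht.1, ht.2⟩ ht.1.le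
    rw [slope_def_field]
    exact div_nonpos_iff.2 (Or.inr ⟨by linarith, by linarith [ht.1]⟩)
  -- integrability of the weight
  have hw : ∀ a b : ℝ, IntervalIntegrable (fun s => (T - s) ^ (-(1:ℝ)/2)) volume a b := by
    intro a b
    have h1 : IntervalIntegrable (fun x : ℝ => x ^ (-(1:ℝ)/2)) volume (T - a) (T - b) :=
      intervalIntegral.intervalIntegrable_rpow' (by norm_num)
    simpa using h1.comp_sub_left T
  set F : ℝ → ℝ := fun s => g s * (T - s) ^ (-(1:ℝ)/2) with hFdef
  have hFint : ∀ a b : ℝ, a ∈ Icc (0:ℝ) 2 → b ∈ Icc (0:ℝ) 2 →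
      IntervalIntegrable F volume a b := by
    intro a b haI hbI
    exact (hw a b).continuousOn_mul (hgc.mono (uIcc_subset_Icc haI hbI))
  -- FTC for the weight
  have hwint : ∀ a b : ℝ, a ≤ b → b ≤ T →
      (∫ s in a..b, (T - s) ^ (-(1:ℝ)/2))
        = 2 * (T - a) ^ ((1:ℝ)/2) - 2 * (T - b) ^ ((1:ℝ)/2) := by
    intro a b hab hbT
    have hcont : ContinuousOn (fun s : ℝ => -2 * (T - s) ^ ((1:ℝ)/2)) (Icc a b) :=
      (continuous_const.mul ((continuous_const.sub continuous_id).rpow_const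
        (fun x => Or.inr (by norm_num)))).continuousOn
    have key : ∀ x ∈ Ioo a b,
        HasDerivAt (fun s : ℝ => -2 * (T - s) ^ ((1:ℝ)/2)) ((T - x) ^ (-(1:ℝ)/2)) x := by
      intro x hx
      have hx0 : 0 < T - x := by linarith [hx.2]
      have h1 : HasDerivAt (fun s : ℝ => T - s) (-1) x := (hasDerivAt_id x).const_sub T
      have h2 : HasDerivAt (fun y : ℝ => y ^ ((1:ℝ)/2))
          ((1/2) * (T - x) ^ ((1:ℝ)/2 - 1)) (T - x) :=
        Real.hasDerivAt_rpow_const (Or.inl hx0.ne')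
      have h3 := (h2.comp x h1).const_mul (-2 : ℝ)
      refine h3.congr_deriv ?_
      rw [show ((1:ℝ)/2 - 1) = -(1:ℝ)/2 by norm_num]
      ring
    rw [intervalIntegral.integral_eq_sub_of_hasDerivAt_of_le hab hcont key (hw a b)]
    ring
  -- the integrand equals F a.e.
  have hcongr : (∫ s in (0:ℝ)..T, deriv φ s * (T - s) ^ (-(1:ℝ)/2))
      = ∫ s in (0:ℝ)..T, F s := by
    apply intervalIntegral.integral_congr_ae
    filter_upwards with s hs
    rw [uIoc_of_le hT0.le] at hs
    rw [hFdef]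
    simp only
    rw [hgd s ⟨hs.1, hs.2.trans_lt hT2⟩]
  -- piece A : (0,1)
  have hA : (∫ s in (0:ℝ)..1, F s) ≤ 2 * Real.sqrt 2 * a₀ := by
    have h1 : (∫ s in (0:ℝ)..1, F s) ≤ ∫ s in (0:ℝ)..1, a₀ * (T - s) ^ (-(1:ℝ)/2) := by
      rw [intervalIntegral.integral_of_le (by norm_num),
          intervalIntegral.integral_of_le (by norm_num : (0:ℝ) ≤ 1),
          integral_Ioc_eq_integral_Ioo, integral_Ioc_eq_integral_Ioo]
      have hintF : IntegrableOn F (Ioo (0:ℝ) 1) volume :=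
        ((hFint 0 1 (by norm_num) (by norm_num)).1.mono_set Ioo_subset_Ioc_self)
      have hintB : IntegrableOn (fun s => a₀ * (T - s) ^ (-(1:ℝ)/2)) (Ioo (0:ℝ) 1) volume :=
        (((hw 0 1).const_mul a₀).1.mono_set Ioo_subset_Ioc_self)
      refine setIntegral_mono_on hintF hintB measurableSet_Ioo ?_
      intro s hs
      have hw0 : (0:ℝ) ≤ (T - s) ^ (-(1:ℝ)/2) :=
        Real.rpow_nonneg (by linarith [hs.2]) _
      have hsa : g s ≤ a₀ := by
        rw [hgd s ⟨hs.1, by linarith [hs.2]⟩]; exact ha s hs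
      exact mul_le_mul_of_nonneg_right hsa hw0
    have h2 : (∫ s in (0:ℝ)..1, a₀ * (T - s) ^ (-(1:ℝ)/2))
        = a₀ * (2 * T ^ ((1:ℝ)/2) - 2 * (T - 1) ^ ((1:ℝ)/2)) := by
      rw [intervalIntegral.integral_const_mul, hwint 0 1 (by norm_num) hT1.le, sub_zero]
    have hTle : T ^ ((1:ℝ)/2) ≤ Real.sqrt 2 := by
      rw [Real.sqrt_eq_rpow]
      exact Real.rpow_le_rpow hT0.le hT2.le (by norm_num)
    have hTm1 : (0:ℝ) ≤ (T - 1) ^ ((1:ℝ)/2) := Real.rpow_nonneg (by linarith) _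
    rw [h2] at h1
    nlinarith
  -- piece B : (1, r₀)
  have hB : (∫ s in (1:ℝ)..r₀, F s) ≤ 0 := by
    rw [intervalIntegral.integral_of_le hr1.le, integral_Ioc_eq_integral_Ioo]
    refine setIntegral_nonpos measurableSet_Ioo ?_
    intro s hs
    have hs12 : s ∈ Ioo (1:ℝ) 2 := ⟨hs.1, hs.2.trans hr2⟩
    have hgs : g s ≤ 0 := by
      rw [hgd s ⟨by linarith [hs.1], hs12.2⟩]; exact hneg s hs12
    have hw0 : (0:ℝ) ≤ (T - s) ^ (-(1:ℝ)/2) :=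
      Real.rpow_nonneg (by linarith [hs.2]) _
    exact mul_nonpos_iff.2 (Or.inr ⟨hgs, hw0⟩)
  -- piece C : (r₀, T)
  have hC : (∫ s in r₀..T, F s)
      ≤ -(3/2) * Real.sqrt 2 * a₀ * δ ^ (-(1:ℝ)/2) * (2 * δ ^ ((1:ℝ)/2)) := by
    have h1 : (∫ s in r₀..T, F s)
        ≤ ∫ s in r₀..T, (-(3/2) * Real.sqrt 2 * a₀ * δ ^ (-(1:ℝ)/2)) * (T - s) ^ (-(1:ℝ)/2) := by
      rw [intervalIntegral.integral_of_le hrT.le,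
          intervalIntegral.integral_of_le hrT.le,
          integral_Ioc_eq_integral_Ioo, integral_Ioc_eq_integral_Ioo]
      have hintF : IntegrableOn F (Ioo r₀ T) volume :=
        ((hFint r₀ T ⟨by linarith, by linarith⟩ ⟨by linarith, by linarith⟩).1.mono_set
          Ioo_subset_Ioc_self)
      have hintB : IntegrableOn
          (fun s => (-(3/2) * Real.sqrt 2 * a₀ * δ ^ (-(1:ℝ)/2)) * (T - s) ^ (-(1:ℝ)/2))
          (Ioo r₀ T) volume :=
        (((hw r₀ T).const_mul _).1.mono_set Ioo_subset_Ioc_self)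
      refine setIntegral_mono_on hintF hintB measurableSet_Ioo ?_
      intro s hs
      have hw0 : (0:ℝ) ≤ (T - s) ^ (-(1:ℝ)/2) :=
        Real.rpow_nonneg (by linarith [hs.2]) _
      have hgs : g s ≤ -(3/2) * Real.sqrt 2 * a₀ * δ ^ (-(1:ℝ)/2) := by
        rw [hgd s ⟨by linarith [hs.1], by linarith [hs.2]⟩]
        exact (hband s hs).2.le
      exact mul_le_mul_of_nonneg_right hgs hw0
    have h2 : (∫ s in r₀..T, (T - s) ^ (-(1:ℝ)/2)) = 2 * δ ^ ((1:ℝ)/2) := by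
      rw [hwint r₀ T hrT.le le_rfl, sub_self,
          show T - r₀ = δ by simp [hTdef]]
      rw [Real.zero_rpow (by norm_num)]
      ring
    calc (∫ s in r₀..T, F s)
        ≤ ∫ s in r₀..T, (-(3/2) * Real.sqrt 2 * a₀ * δ ^ (-(1:ℝ)/2)) * (T - s) ^ (-(1:ℝ)/2) := h1
      _ = (-(3/2) * Real.sqrt 2 * a₀ * δ ^ (-(1:ℝ)/2)) * (2 * δ ^ ((1:ℝ)/2)) := by
          rw [intervalIntegral.integral_const_mul, h2]
      _ = _ := by ring
  -- combine
  have hδpow : δ ^ (-(1:ℝ)/2) * δ ^ ((1:ℝ)/2) = 1 := by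
    rw [← Real.rpow_add hδ]
    norm_num
  have hsplit : (∫ s in (0:ℝ)..T, F s)
      = (∫ s in (0:ℝ)..1, F s) + (∫ s in (1:ℝ)..r₀, F s) + (∫ s in r₀..T, F s) := by
    rw [intervalIntegral.integral_add_adjacent_intervals
        (hFint 0 1 (by norm_num) (by norm_num))
        (hFint 1 r₀ (by norm_num) ⟨by linarith, by linarith⟩),
      intervalIntegral.integral_add_adjacent_intervals
        (hFint 0 r₀ (by norm_num) ⟨by linarith, by linarith⟩)
        (hFint r₀ T ⟨by linarith, by linarith⟩ ⟨by linarith, by linarith⟩)]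
  have hmain : 2 * (∫ s in (0:ℝ)..T, deriv φ s * (T - s) ^ (-(1:ℝ)/2))
      ≤ -2 * Real.sqrt 2 * a₀ := by
    rw [hcongr, hsplit]
    have hCval : (∫ s in r₀..T, F s) ≤ -3 * Real.sqrt 2 * a₀ := by
      refine hC.trans_eq ?_
      have : -(3/2) * Real.sqrt 2 * a₀ * δ ^ (-(1:ℝ)/2) * (2 * δ ^ ((1:ℝ)/2))
          = -3 * Real.sqrt 2 * a₀ * (δ ^ (-(1:ℝ)/2) * δ ^ ((1:ℝ)/2)) := by ring
      rw [this, hδpow, mul_one]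
    nlinarith [hA, hB]
  -- third statement
  have h3 : φ T ≥ (1/2) * φ r₀ := by
    have hsub : Icc r₀ T ⊆ Ioo (0:ℝ) 2 := fun x hx => ⟨by linarith [hx.1], by linarith [hx.2]⟩
    have hderiv_cont : ContinuousOn (deriv φ) (Icc r₀ T) := by
      refine (hgc.mono (hsub.trans Ioo_subset_Icc_self)).congr ?_
      intro x hx
      exact (hgd x (hsub hx)).symm
    have hFTC : (∫ s in r₀..T, deriv φ s) = φ T - φ r₀ :=
      intervalIntegral.integral_eq_sub_of_hasDerivAt_of_le hrT.le
        (hC1.continuousOn.mono ((hsub.trans Ioo_subset_Icc_self)))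
        (fun x hx => (hdiff x (hsub (Ioo_subset_Icc_self hx))).hasDerivAt)
        (hderiv_cont.intervalIntegrable_of_Icc hrT.le)
    have hlb : (∫ s in r₀..T, (-(1/2) * δ⁻¹ * φ r₀ : ℝ)) ≤ ∫ s in r₀..T, deriv φ s := by
      rw [intervalIntegral.integral_of_le hrT.le, intervalIntegral.integral_of_le hrT.le,
          integral_Ioc_eq_integral_Ioo, integral_Ioc_eq_integral_Ioo]
      have hintc : IntegrableOn (fun _ : ℝ => (-(1/2) * δ⁻¹ * φ r₀ : ℝ)) (Ioo r₀ T) volume :=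
        integrableOn_const measure_Ioo_lt_top.ne
      have hintd : IntegrableOn (deriv φ) (Ioo r₀ T) volume :=
        ((hderiv_cont.intervalIntegrable_of_Icc hrT.le).1.mono_set Ioo_subset_Ioc_self)
      exact setIntegral_mono_on hintc hintd measurableSet_Ioo (fun s hs => (hband s hs).1.le)
    rw [intervalIntegral.integral_const] at hlb
    have hTr : T - r₀ = δ := by simp [hTdef]
    rw [hTr, smul_eq_mul] at hlb
    have heq : δ * (-(1/2) * δ⁻¹ * φ r₀) = -(1/2) * φ r₀ := by
      field_simp
    rw [hFTC] at hlb
    rw [heq] at hlb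
    linarith
  exact ⟨hmain, by nlinarith, h3⟩
end

section
/- For n ≥ 3 and x' ∈ ℝ^{n-1} with x' ≠ 0, the identity (1/(2√π)) ∫_{-∞}^t (t-s)^{-3/2} Γ'(x', t-s) ds = |x'|^{-n} π^{-n/2} ∫_0^∞ s^{n/2 - 1} e^{-s} ds holds, where Γ'(x', τ) = (4πτ)^{-(n-1)/2} exp(-|x'|²/(4τ)) is the (n-1)-dimensional Gaussian kernel. In particular the left-hand side equals π^{-n/2} Γ(n/2) |x'|^{-n}, where Γ denotes the Gamma function. -/
open Real MeasureTheory Set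

/-- explicit computation of the singular time integral of the
`(n-1)`-dimensional Gaussian kernel. -/
theorem stmt6 (n : ℕ) (hn : 3 ≤ n)
    (x' : EuclideanSpace ℝ (Fin (n - 1))) (hx : x' ≠ 0) (t : ℝ)
    (G : ℝ → ℝ)
    (hG : ∀ τ : ℝ, G τ =
      if 0 < τ then (4 * π * τ) ^ (-((n:ℝ) - 1)/2) * Real.exp (-‖x'‖^2 / (4 * τ)) else 0) :
    (1 / (2 * Real.sqrt π)) * (∫ s in Iio t, (t - s) ^ (-(3:ℝ)/2) * G (t - s))
      = ‖x'‖ ^ (-(n:ℝ)) * π ^ (-(n:ℝ)/2) * ∫ s in Ioi (0:ℝ), s ^ ((n:ℝ)/2 - 1) * Real.exp (-s) ∧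
    (1 / (2 * Real.sqrt π)) * (∫ s in Iio t, (t - s) ^ (-(3:ℝ)/2) * G (t - s))
      = π ^ (-(n:ℝ)/2) * Real.Gamma ((n:ℝ)/2) * ‖x'‖ ^ (-(n:ℝ)) := by
  have hn3 : (3:ℝ) ≤ (n:ℝ) := by exact_mod_cast hn
  have hxn : (0:ℝ) < ‖x'‖ := norm_pos_iff.mpr hx
  have ha : (0:ℝ) < ‖x'‖^2 := by positivity
  have hgam : 0 < (n:ℝ)/2 := by linarith
  -- the right-hand integral is Γ(n/2)
  have hRint : (∫ s in Ioi (0:ℝ), s ^ ((n:ℝ)/2 - 1) * Real.exp (-s)) = Real.Gamma ((n:ℝ)/2) := by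
    have := Real.integral_rpow_mul_exp_neg_mul_Ioi hgam one_pos
    simp only [one_mul, one_div, inv_one, Real.one_rpow] at this
    rw [this]
  -- step A : translate the integral to `Ioi 0`
  have hA : (∫ s in Iio t, (t - s) ^ (-(3:ℝ)/2) * G (t - s))
      = ∫ τ in Ioi (0:ℝ), τ ^ (-(3:ℝ)/2) * G τ := by
    have hmp : MeasurePreserving (fun s : ℝ => t - s) volume volume :=
      Measure.measurePreserving_sub_left volume t
    have hemb : MeasurableEmbedding (fun s : ℝ => t - s) :=
      (Homeomorph.subLeft t).isClosedEmbedding.measurableEmbedding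
    have := hmp.setIntegral_preimage_emb hemb
      (fun τ => τ ^ (-(3:ℝ)/2) * G τ) (Ioi 0)
    rw [← this]
    congr 1
    ext s; simp [sub_pos]
  -- step B : rewrite the integrand in substitution form
  have hB : (∫ τ in Ioi (0:ℝ), τ ^ (-(3:ℝ)/2) * G τ)
      = (4*π) ^ (-((n:ℝ)-1)/2) * ∫ τ in Ioi (0:ℝ),
          (|(-1:ℝ)| * τ ^ ((-1:ℝ)-1)) •
            ((fun y : ℝ => y ^ ((n:ℝ)/2 - 1) * Real.exp (-(‖x'‖^2/4 * y))) (τ ^ ((-1):ℝ))) := by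
    rw [← integral_const_mul]
    refine setIntegral_congr_fun measurableSet_Ioi (fun τ hτ => ?_)
    have hτ : (0:ℝ) < τ := hτ
    simp only [hG, if_pos hτ, smul_eq_mul, abs_neg, abs_one, one_mul]
    rw [Real.mul_rpow (by positivity) hτ.le,
        ← Real.rpow_mul hτ.le]
    rw [show ((-1:ℝ)) - 1 = -2 by norm_num]
    rw [show Real.exp (-(‖x'‖^2/4 * τ ^ ((-1):ℝ))) = Real.exp (-‖x'‖^2 / (4*τ)) by
      rw [Real.rpow_neg_one]; congr 1; field_simp]
    rw [show τ ^ (-(2:ℝ)) * (τ ^ ((-1:ℝ) * ((n:ℝ)/2 - 1)) * Real.exp (-‖x'‖^2 / (4*τ)))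
        = (τ ^ (-(2:ℝ)) * τ ^ ((-1:ℝ) * ((n:ℝ)/2 - 1))) * Real.exp (-‖x'‖^2 / (4*τ)) by ring]
    rw [← Real.rpow_add hτ]
    rw [show τ ^ (-(3:ℝ)/2) * ((4*π) ^ (-((n:ℝ)-1)/2) * τ ^ (-((n:ℝ)-1)/2) *
          Real.exp (-‖x'‖^2 / (4*τ)))
        = (4*π) ^ (-((n:ℝ)-1)/2) * ((τ ^ (-(3:ℝ)/2) * τ ^ (-((n:ℝ)-1)/2)) *
          Real.exp (-‖x'‖^2 / (4*τ))) by ring]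
    rw [← Real.rpow_add hτ]
    ring_nf
  have hsub := MeasureTheory.integral_comp_rpow_Ioi
    (fun y : ℝ => y ^ ((n:ℝ)/2 - 1) * Real.exp (-(‖x'‖^2/4 * y)))
    (p := -1) (by norm_num)
  rw [hsub] at hB
  have hC : (∫ y in Ioi (0:ℝ), y ^ ((n:ℝ)/2 - 1) * Real.exp (-(‖x'‖^2/4 * y)))
      = (1/(‖x'‖^2/4)) ^ ((n:ℝ)/2) * Real.Gamma ((n:ℝ)/2) :=
    Real.integral_rpow_mul_exp_neg_mul_Ioi hgam (by positivity)
  -- put everything together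
  have key : (1 / (2 * Real.sqrt π)) * (∫ s in Iio t, (t - s) ^ (-(3:ℝ)/2) * G (t - s))
      = π ^ (-(n:ℝ)/2) * Real.Gamma ((n:ℝ)/2) * ‖x'‖ ^ (-(n:ℝ)) := by
    rw [hA, hB, hC]
    have hconst : (1 / (2 * Real.sqrt π)) * ((4*π) ^ (-((n:ℝ)-1)/2) *
        (1/(‖x'‖^2/4)) ^ ((n:ℝ)/2)) = π ^ (-(n:ℝ)/2) * ‖x'‖ ^ (-(n:ℝ)) := by
      have h4 : (1:ℝ)/(‖x'‖^2/4) = 4 * (‖x'‖^2)⁻¹ := by field_simp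
      have e4 : (4:ℝ)^(-((n:ℝ)-1)/2) * (4:ℝ)^((n:ℝ)/2) = 2 := by
        rw [← Real.rpow_add (by norm_num : (0:ℝ) < 4),
            show -((n:ℝ)-1)/2 + (n:ℝ)/2 = 1/2 by ring,
            show (4:ℝ) = 2^(2:ℕ) by norm_num, ← Real.rpow_natCast 2 2,
            ← Real.rpow_mul (by norm_num : (0:ℝ) ≤ 2)]
        norm_num
      have epi : π^(-((n:ℝ)-1)/2) = π^(-(n:ℝ)/2) * Real.sqrt π := by
        rw [Real.sqrt_eq_rpow, ← Real.rpow_add pi_pos]; congr 1; ring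
      have ea : (‖x'‖^2:ℝ)^(-((n:ℝ)/2)) = ‖x'‖^(-(n:ℝ)) := by
        rw [← Real.rpow_natCast ‖x'‖ 2, ← Real.rpow_mul hxn.le]
        congr 1
        push_cast
        ring
      have hsp : Real.sqrt π ≠ 0 := by positivity
      rw [h4, Real.mul_rpow (show (0:ℝ) ≤ 4 by norm_num)
            (show (0:ℝ) ≤ (‖x'‖^2)⁻¹ by positivity),
          Real.inv_rpow ha.le, ← Real.rpow_neg ha.le,
          Real.mul_rpow (show (0:ℝ) ≤ 4 by norm_num) pi_pos.le]
      rw [show 1 / (2 * Real.sqrt π) * ((4:ℝ)^(-((n:ℝ)-1)/2) * π^(-((n:ℝ)-1)/2) *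
            ((4:ℝ)^((n:ℝ)/2) * (‖x'‖^2:ℝ)^(-((n:ℝ)/2))))
          = ((4:ℝ)^(-((n:ℝ)-1)/2) * (4:ℝ)^((n:ℝ)/2)) * π^(-((n:ℝ)-1)/2) *
            (‖x'‖^2:ℝ)^(-((n:ℝ)/2)) * (1 / (2 * Real.sqrt π)) by ring,
          e4, epi, ea]
      field_simp
    calc (1 / (2 * Real.sqrt π)) * ((4*π) ^ (-((n:ℝ)-1)/2) *
          ((1/(‖x'‖^2/4)) ^ ((n:ℝ)/2) * Real.Gamma ((n:ℝ)/2)))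
        = ((1 / (2 * Real.sqrt π)) * ((4*π) ^ (-((n:ℝ)-1)/2) *
            (1/(‖x'‖^2/4)) ^ ((n:ℝ)/2))) * Real.Gamma ((n:ℝ)/2) := by ring
      _ = (π ^ (-(n:ℝ)/2) * ‖x'‖ ^ (-(n:ℝ))) * Real.Gamma ((n:ℝ)/2) := by rw [hconst]
      _ = π ^ (-(n:ℝ)/2) * Real.Gamma ((n:ℝ)/2) * ‖x'‖ ^ (-(n:ℝ)) := by ring
  exact ⟨by rw [key, hRint]; ring, key⟩
end
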